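/- Let B, H be elements of L. If ⁅H, ⁅B, H⁆⁆ = 0, then ⁅H, ⁅B, ⁅B, H⁆⁆⁆ = 0; that is, if the third charge Q3 = ⁅B, H⁆ commutes with H, then so does the fourth charge Q4 = ⁅B, Q3⁆. (Equation (7)–(9) of the paper, the base case of Lemma 1.) -/
import Mathlib

/-- Eqs. (7)-(9) of the paper, base case of Lemma 1: In a Lie
ring `L`, if `⁅H, ⁅B, H⁆⁆ = 0` then `⁅H, ⁅B, ⁅B, H⁆⁆⁆ = 0`. -/
theorem third_implies_fourth {L : Type*} [LieRing L] (B H : L)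
    (h : ⁅H, ⁅B, H⁆⁆ = 0) :
    ⁅H, ⁅B, ⁅B, H⁆⁆⁆ = 0 := by
  rw [leibniz_lie, h, lie_zero, add_zero, ← lie_skew B H, lie_neg, lie_self, neg_zero]
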